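/- For the weight ϖ(q,p) = (e^{2ν}/|q|) e^{-ν(|q|+1/|q|)} α(arg q)(1 - |q|p²/(2σ²)) e^{-|q|p²/(2σ²)}, the function Ω(q) = ∫_{ℝ²∖{0}} (d²x/|x|²) ϖ̂_p(q, x), where ϖ̂_p(q,x) = (1/2π)∫ e^{-ip·x} ϖ(q,p) d²p, equals (πσ² e^{2ν}/|q|²) e^{-ν(|q|+1/|q|)} α(arg q); in particular Ω(1) = πσ². -/

import Mathlib

open MeasureTheory Real

section AuxOmega
open Filter Topology

noncomputable def gK (a s : ℝ) (t : ℝ) : ℂ :=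
  Complex.exp (-(a:ℂ) * t^2 + (-Complex.I * s) * t)

lemma norm_gK (a s t : ℝ) : ‖gK a s t‖ = rexp (-(a * t^2)) := by
  rw [gK, Complex.norm_exp]
  congr 1
  simp [Complex.add_re, Complex.mul_re, Complex.mul_im, ← Complex.ofReal_pow]

lemma continuous_gK (a s : ℝ) : Continuous (gK a s) := by
  unfold gK; fun_prop

lemma integrable_gK {a : ℝ} (ha : 0 < a) (s : ℝ) : Integrable (gK a s) := by
  refine (integrable_exp_neg_mul_sq ha).mono' (continuous_gK a s).aestronglyMeasurable ?_
  filter_upwards with t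
  rw [norm_gK, neg_mul]

lemma integrable_mul_gK {a : ℝ} (ha : 0 < a) (s : ℝ) :
    Integrable (fun t : ℝ => (t:ℂ) * gK a s t) := by
  refine (integrable_mul_exp_neg_mul_sq ha).abs.mono'
    ((Complex.continuous_ofReal.mul (continuous_gK a s)).aestronglyMeasurable) ?_
  filter_upwards with t
  rw [norm_mul, norm_gK, abs_mul, abs_of_pos (Real.exp_pos _), neg_mul]
  simp

lemma integrable_sq_gK {a : ℝ} (ha : 0 < a) (s : ℝ) :
    Integrable (fun t : ℝ => (t:ℂ)^2 * gK a s t) := by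
  have h2 := integrable_rpow_mul_exp_neg_mul_sq ha (by norm_num : (-1:ℝ) < 2)
  refine h2.abs.mono'
    (((Complex.continuous_ofReal.pow 2).mul (continuous_gK a s)).aestronglyMeasurable) ?_
  filter_upwards with t
  rw [norm_mul, norm_gK, abs_mul, abs_of_pos (Real.exp_pos _), neg_mul]
  simp [sq_abs]

lemma hasDerivAt_gK (a s t : ℝ) :
    HasDerivAt (gK a s) ((-(a:ℂ) * (2*t) + (-Complex.I * s)) * gK a s t) t := by
  have h1 : HasDerivAt (fun z : ℂ => -(a:ℂ) * z^2 + (-Complex.I * s) * z)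
      (-(a:ℂ) * (2 * (t:ℂ)) + (-Complex.I * s)) (t:ℝ) := by
    have h0 := ((hasDerivAt_pow 2 ((t:ℝ):ℂ)).const_mul (-(a:ℂ))).add
      ((hasDerivAt_id ((t:ℝ):ℂ)).const_mul (-Complex.I * s))
    have e : (fun z : ℂ => -(a:ℂ) * z^2 + (-Complex.I * s) * z)
        = (fun y => -(a:ℂ) * y ^ 2) + fun y => -Complex.I * s * id y := by ext; simp
    rw [e]; exact h0.congr_deriv (by norm_num)
  have h2 := (h1.comp_ofReal).cexp
  unfold gK
  rw [show ((-(a:ℂ) * (2*t) + (-Complex.I * s)) * Complex.exp (-(a:ℂ) * (t:ℂ)^2 + (-Complex.I * s) * t))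
    = Complex.exp (-(a:ℂ) * (t:ℂ)^2 + (-Complex.I * s) * t) * (-(a:ℂ) * (2*t) + (-Complex.I * s))
    from mul_comm _ _]
  exact h2


lemma tendsto_absmul_exp {a : ℝ} (ha : 0 < a) (n : ℕ) :
    Tendsto (fun t : ℝ => |t|^n * rexp (-(a*t^2))) atTop (𝓝 0) := by
  have hexp : Tendsto (fun x : ℝ => rexp (-(1/2) * x)) atTop (𝓝 0) := by
    have h2 : Tendsto (fun x : ℝ => (1/2) * x) atTop atTop :=
      Tendsto.const_mul_atTop (by norm_num) tendsto_id
    have := Real.tendsto_exp_neg_atTop_nhds_zero.comp h2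
    simpa [Function.comp_def, neg_mul] using this
  have h := (rpow_mul_exp_neg_mul_sq_isLittleO_exp_neg ha (n:ℝ)).tendsto_zero_of_tendsto hexp
  apply h.congr'
  filter_upwards [eventually_ge_atTop (0:ℝ)] with t ht
  rw [Real.rpow_natCast, _root_.abs_of_nonneg ht, neg_mul]

lemma tendsto_absmul_exp_bot {a : ℝ} (ha : 0 < a) (n : ℕ) :
    Tendsto (fun t : ℝ => |t|^n * rexp (-(a*t^2))) atBot (𝓝 0) := by
  have := (tendsto_absmul_exp ha n).comp tendsto_neg_atBot_atTop
  apply this.congr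
  intro t; simp [Function.comp_def, abs_neg, neg_sq]

lemma tendsto_gK (a : ℝ) (ha : 0 < a) (s : ℝ) (n : ℕ) :
    Tendsto (fun t : ℝ => (t:ℂ)^n * gK a s t) atTop (𝓝 0) ∧
    Tendsto (fun t : ℝ => (t:ℂ)^n * gK a s t) atBot (𝓝 0) := by
  have hn : ∀ t : ℝ, ‖(t:ℂ)^n * gK a s t‖ = |t|^n * rexp (-(a*t^2)) := by
    intro t
    rw [norm_mul, norm_gK, norm_pow, Complex.norm_real, Real.norm_eq_abs]
  exact ⟨squeeze_zero_norm (fun t => le_of_eq (hn t)) (tendsto_absmul_exp ha n),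
    squeeze_zero_norm (fun t => le_of_eq (hn t)) (tendsto_absmul_exp_bot ha n)⟩

lemma integral_deriv_eq_zero {g g' : ℝ → ℂ} (hd : ∀ x : ℝ, HasDerivAt g (g' x) x)
    (hi : Integrable g') (ht : Tendsto g atTop (𝓝 0)) (hb : Tendsto g atBot (𝓝 0)) :
    ∫ x : ℝ, g' x = 0 := by
  rw [← intervalIntegral.integral_Iic_add_Ioi (b := (0:ℝ)) hi.integrableOn hi.integrableOn]
  rw [MeasureTheory.integral_Iic_of_hasDerivAt_of_tendsto'
    (fun x _ => hd x) hi.integrableOn hb]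
  rw [MeasureTheory.integral_Ioi_of_hasDerivAt_of_tendsto'
    (fun x _ => hd x) hi.integrableOn ht]
  ring

lemma integral_gK {a : ℝ} (ha : 0 < a) (s : ℝ) :
    ∫ t : ℝ, gK a s t = (↑π/(a:ℂ))^(1/2:ℂ) * Complex.exp (-(s:ℂ)^2/(4*a)) := by
  have ha' : (a:ℂ) ≠ 0 := Complex.ofReal_ne_zero.mpr ha.ne'
  have hb : (-(a:ℂ)).re < 0 := by simpa using ha
  have h := integral_cexp_quadratic hb (-Complex.I * s) 0
  rw [show ∫ t : ℝ, gK a s t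
      = ∫ t : ℝ, Complex.exp (-(a:ℂ) * t^2 + (-Complex.I * s) * t + 0) from by
    simp [gK], h, neg_neg]
  congr 1
  rw [mul_pow, neg_sq, Complex.I_sq]
  field_simp
  congr 1; ring

lemma integral_mul_gK {a : ℝ} (ha : 0 < a) (s : ℝ) :
    ∫ t : ℝ, (t:ℂ) * gK a s t
      = (-Complex.I * s)/(2*(a:ℂ)) * ∫ t : ℝ, gK a s t := by
  have ha' : (a:ℂ) ≠ 0 := Complex.ofReal_ne_zero.mpr ha.ne'
  have hint : Integrable (fun t : ℝ =>
      (-2*(a:ℂ)) * ((t:ℂ) * gK a s t) + (-Complex.I * s) * gK a s t) :=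
    ((integrable_mul_gK ha s).const_mul _).add ((integrable_gK ha s).const_mul _)
  have hz : ∫ t : ℝ, ((-2*(a:ℂ)) * ((t:ℂ) * gK a s t) + (-Complex.I * s) * gK a s t) = 0 := by
    refine integral_deriv_eq_zero (g := gK a s) (fun t => ?_) hint ?_ ?_
    · have := hasDerivAt_gK a s t
      convert this using 1; ring
    · simpa using (tendsto_gK a ha s 0).1
    · simpa using (tendsto_gK a ha s 0).2
  have h1 : Integrable (fun t : ℝ => (-2*(a:ℂ)) * ((t:ℂ) * gK a s t)) :=
    (integrable_mul_gK ha s).const_mul _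
  have h2 : Integrable (fun t : ℝ => (-Complex.I * s) * gK a s t) :=
    (integrable_gK ha s).const_mul _
  rw [integral_add h1 h2, integral_const_mul, integral_const_mul] at hz
  field_simp
  linear_combination (-1 : ℂ) * hz

lemma integral_sq_gK {a : ℝ} (ha : 0 < a) (s : ℝ) :
    ∫ t : ℝ, (t:ℂ)^2 * gK a s t
      = (1/(2*(a:ℂ)) - (s:ℂ)^2/(4*(a:ℂ)^2)) * ∫ t : ℝ, gK a s t := by
  have ha' : (a:ℂ) ≠ 0 := Complex.ofReal_ne_zero.mpr ha.ne'
  have hint : Integrable (fun t : ℝ =>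
      gK a s t + (-Complex.I * s) * ((t:ℂ) * gK a s t)
        + (-2*(a:ℂ)) * ((t:ℂ)^2 * gK a s t)) :=
    ((integrable_gK ha s).add ((integrable_mul_gK ha s).const_mul _)).add
      ((integrable_sq_gK ha s).const_mul _)
  have hz : ∫ t : ℝ, (gK a s t + (-Complex.I * s) * ((t:ℂ) * gK a s t)
      + (-2*(a:ℂ)) * ((t:ℂ)^2 * gK a s t)) = 0 := by
    refine integral_deriv_eq_zero (g := fun t : ℝ => (t:ℂ) * gK a s t) (fun t => ?_) hint ?_ ?_
    · have hid : HasDerivAt (fun u : ℝ => (u:ℂ)) 1 t := by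
        simpa using (hasDerivAt_id ((t:ℝ):ℂ)).comp_ofReal
      have := hid.mul (hasDerivAt_gK a s t)
      exact this.congr_deriv (by ring)
    · simpa using (tendsto_gK a ha s 1).1
    · simpa using (tendsto_gK a ha s 1).2
  have h2 : Integrable (fun t : ℝ => (-Complex.I * s) * ((t:ℂ) * gK a s t)) :=
    (integrable_mul_gK ha s).const_mul _
  have h1 : Integrable (fun t : ℝ => gK a s t + (-Complex.I * s) * ((t:ℂ) * gK a s t)) :=
    (integrable_gK ha s).add h2
  have h3 : Integrable (fun t : ℝ => (-2*(a:ℂ)) * ((t:ℂ)^2 * gK a s t)) :=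
    (integrable_sq_gK ha s).const_mul _
  rw [integral_add h1 h3, integral_add (integrable_gK ha s) h2,
    integral_const_mul, integral_const_mul, integral_mul_gK ha s] at hz
  field_simp at hz ⊢
  linear_combination (-2:ℂ) * hz
    + (2*(s:ℂ)^2*(∫ t : ℝ, gK a s t)) * Complex.I_sq

lemma key2D {a : ℝ} (ha : 0 < a) (x : ℂ) :
    ∫ p : ℂ, Complex.exp (-Complex.I * (((starRingEnd ℂ p) * x).re : ℂ))
      * (((1 - a * Complex.normSq p) * rexp (-(a * Complex.normSq p)) : ℝ) : ℂ)
    = (↑π/(a:ℂ)) * ((Complex.normSq x : ℂ)/(4*(a:ℂ)))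
        * Complex.exp (-(Complex.normSq x : ℂ)/(4*(a:ℂ))) := by
  have ha' : (a:ℂ) ≠ 0 := Complex.ofReal_ne_zero.mpr ha.ne'
  have hpt : ∀ p : ℂ, Complex.exp (-Complex.I * (((starRingEnd ℂ p) * x).re : ℂ))
      * (((1 - a * Complex.normSq p) * rexp (-(a * Complex.normSq p)) : ℝ) : ℂ)
      = gK a x.re p.re * gK a x.im p.im
        + ((-(a:ℂ)) * ((p.re:ℂ)^2 * gK a x.re p.re)) * gK a x.im p.im
        + gK a x.re p.re * ((-(a:ℂ)) * ((p.im:ℂ)^2 * gK a x.im p.im)) := by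
    intro p
    have e1 : gK a x.re p.re * gK a x.im p.im
        = Complex.exp ((-(a:ℂ)*(p.re:ℂ)^2 + (-Complex.I*x.re)*p.re)
          + (-(a:ℂ)*(p.im:ℂ)^2 + (-Complex.I*x.im)*p.im)) := by
      rw [gK, gK, ← Complex.exp_add]
    have harg : -Complex.I * (((starRingEnd ℂ p) * x).re : ℂ) + ((-(a * Complex.normSq p) : ℝ) : ℂ)
        = (-(a:ℂ)*(p.re:ℂ)^2 + (-Complex.I*x.re)*p.re)
          + (-(a:ℂ)*(p.im:ℂ)^2 + (-Complex.I*x.im)*p.im) := by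
      rw [Complex.mul_re, Complex.conj_re, Complex.conj_im, Complex.normSq_apply]
      push_cast
      ring
    calc Complex.exp (-Complex.I * (((starRingEnd ℂ p) * x).re : ℂ))
          * (((1 - a * Complex.normSq p) * rexp (-(a * Complex.normSq p)) : ℝ) : ℂ)
        = ((1:ℂ) - (a:ℂ) * (Complex.normSq p : ℂ))
            * Complex.exp (-Complex.I * (((starRingEnd ℂ p) * x).re : ℂ)
              + ((-(a * Complex.normSq p) : ℝ) : ℂ)) := by
          rw [Complex.exp_add]; push_cast; ring
      _ = ((1:ℂ) - (a:ℂ) * (Complex.normSq p : ℂ)) * (gK a x.re p.re * gK a x.im p.im) := by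
          rw [harg, e1]
      _ = _ := by rw [Complex.normSq_apply]; push_cast; ring
  simp only [hpt]
  rw [← ((Complex.volume_preserving_equiv_real_prod).symm).integral_comp
    (Complex.measurableEquivRealProd.symm.measurableEmbedding) _]
  simp only [Complex.measurableEquivRealProd_symm_apply]
  rw [MeasureTheory.Measure.volume_eq_prod]
  have hF1 := integrable_gK ha x.re
  have hG1 := integrable_gK ha x.im
  have hF2 : Integrable (fun t : ℝ => -(a:ℂ) * ((t:ℂ)^2 * gK a x.re t)) :=
    (integrable_sq_gK ha x.re).const_mul _
  have hG2 : Integrable (fun t : ℝ => -(a:ℂ) * ((t:ℂ)^2 * gK a x.im t)) :=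
    (integrable_sq_gK ha x.im).const_mul _
  have hP1 : Integrable (fun z : ℝ × ℝ => gK a x.re z.1 * gK a x.im z.2)
      (volume.prod volume) := hF1.mul_prod hG1
  have hP2 : Integrable (fun z : ℝ × ℝ =>
      (-(a:ℂ) * ((z.1:ℂ)^2 * gK a x.re z.1)) * gK a x.im z.2) (volume.prod volume) :=
    hF2.mul_prod hG1
  have hP3 : Integrable (fun z : ℝ × ℝ =>
      gK a x.re z.1 * (-(a:ℂ) * ((z.2:ℂ)^2 * gK a x.im z.2))) (volume.prod volume) :=
    hF1.mul_prod hG2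
  have hP12 : Integrable (fun z : ℝ × ℝ => gK a x.re z.1 * gK a x.im z.2
      + (-(a:ℂ) * ((z.1:ℂ)^2 * gK a x.re z.1)) * gK a x.im z.2) (volume.prod volume) :=
    hP1.add hP2
  rw [integral_add hP12 hP3, integral_add hP1 hP2, integral_prod_mul,
    integral_prod_mul (f := fun t : ℝ => -(a:ℂ) * ((t:ℂ)^2 * gK a x.re t)) (g := gK a x.im),
    integral_prod_mul (f := gK a x.re) (g := fun t : ℝ => -(a:ℂ) * ((t:ℂ)^2 * gK a x.im t)),
    integral_const_mul, integral_const_mul,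
    integral_sq_gK ha x.re, integral_sq_gK ha x.im, integral_gK ha x.re, integral_gK ha x.im]
  have hπa : (↑π/(a:ℂ)) ≠ 0 :=
    div_ne_zero (Complex.ofReal_ne_zero.mpr Real.pi_ne_zero) ha'
  have hP : ((↑π/(a:ℂ))^(1/2:ℂ)) * ((↑π/(a:ℂ))^(1/2:ℂ)) = ↑π/(a:ℂ) := by
    rw [← Complex.cpow_add _ _ hπa]; norm_num
  have hE : Complex.exp (-(x.re:ℂ)^2 / (4*(a:ℂ))) * Complex.exp (-(x.im:ℂ)^2 / (4*(a:ℂ)))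
      = Complex.exp (-((x.re:ℂ)*x.re + (x.im:ℂ)*x.im) / (4*(a:ℂ))) := by
    rw [← Complex.exp_add]; congr 1; ring
  rw [Complex.normSq_apply]
  push_cast
  rw [show ((↑π/(a:ℂ))^(1/2:ℂ)) * Complex.exp (-(x.re:ℂ)^2 / (4*(a:ℂ)))
        * (((↑π/(a:ℂ))^(1/2:ℂ)) * Complex.exp (-(x.im:ℂ)^2 / (4*(a:ℂ))))
      + -(a:ℂ) * ((1/(2*(a:ℂ)) - (x.re:ℂ)^2/(4*(a:ℂ)^2))
          * (((↑π/(a:ℂ))^(1/2:ℂ)) * Complex.exp (-(x.re:ℂ)^2 / (4*(a:ℂ)))))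
        * (((↑π/(a:ℂ))^(1/2:ℂ)) * Complex.exp (-(x.im:ℂ)^2 / (4*(a:ℂ))))
      + ((↑π/(a:ℂ))^(1/2:ℂ)) * Complex.exp (-(x.re:ℂ)^2 / (4*(a:ℂ)))
        * (-(a:ℂ) * ((1/(2*(a:ℂ)) - (x.im:ℂ)^2/(4*(a:ℂ)^2))
          * (((↑π/(a:ℂ))^(1/2:ℂ)) * Complex.exp (-(x.im:ℂ)^2 / (4*(a:ℂ))))))
      = (((↑π/(a:ℂ))^(1/2:ℂ)) * ((↑π/(a:ℂ))^(1/2:ℂ)))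
        * (Complex.exp (-(x.re:ℂ)^2 / (4*(a:ℂ))) * Complex.exp (-(x.im:ℂ)^2 / (4*(a:ℂ))))
        * ((1:ℂ) - (a:ℂ)*(1/(2*(a:ℂ)) - (x.re:ℂ)^2/(4*(a:ℂ)^2))
            - (a:ℂ)*(1/(2*(a:ℂ)) - (x.im:ℂ)^2/(4*(a:ℂ)^2))) from by ring, hP, hE]
  have hS : (1:ℂ) - (a:ℂ)*(1/(2*(a:ℂ)) - (x.re:ℂ)^2/(4*(a:ℂ)^2))
      - (a:ℂ)*(1/(2*(a:ℂ)) - (x.im:ℂ)^2/(4*(a:ℂ)^2))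
      = ((x.re:ℂ)*x.re + (x.im:ℂ)*x.im)/(4*(a:ℂ)) := by
    field_simp
    ring
  rw [hS]
  ring

end AuxOmega

/-- The weight ϖ(q,p) = (e^{2ν}/|q|) e^{-ν(|q|+1/|q|)} α(arg q)(1-|q|p²/(2σ²))e^{-|q|p²/(2σ²)}. -/
noncomputable def varpi (ν σ : ℝ) (α : ℝ → ℂ) (q p : ℂ) : ℂ :=
  ((Real.exp (2 * ν) / ‖q‖
      * Real.exp (-(ν * (‖q‖ + 1 / ‖q‖))) : ℝ) : ℂ)
    * α (Complex.arg q)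
    * (((1 - ‖q‖ * Complex.normSq p / (2 * σ ^ 2))
        * Real.exp (-(‖q‖ * Complex.normSq p / (2 * σ ^ 2))) : ℝ) : ℂ)

/-- The partial 2D Fourier transform in p:  ϖ̂_p(q,x) = (1/2π)∫ e^{-ip·x} ϖ(q,p) d²p. -/
noncomputable def hatvarpi (ν σ : ℝ) (α : ℝ → ℂ) (q x : ℂ) : ℂ :=
  (1 / (2 * π) : ℝ) * ∫ p : ℂ,
    Complex.exp (-Complex.I * (((starRingEnd ℂ p) * x).re : ℂ)) * varpi ν σ α q p ∂volume

/-- Ω(q) = ∫_{ℝ²∖{0}} (d²x/|x|²) ϖ̂_p(q,x). -/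
noncomputable def OmegaAff (ν σ : ℝ) (α : ℝ → ℂ) (q : ℂ) : ℂ :=
  ∫ x : ℂ, hatvarpi ν σ α q x / (Complex.normSq x : ℂ) ∂volume


section AuxOmega2
open Filter Topology

lemma hatvarpi_eq (ν σ : ℝ) (hσ : 0 < σ) (α : ℝ → ℂ) (q : ℂ) (hq : q ≠ 0) {A : ℝ}
    (hA : A = ‖q‖ / (2 * σ^2)) (x : ℂ) :
    hatvarpi ν σ α q x
      = ((Real.exp (2 * ν) / ‖q‖
            * Real.exp (-(ν * (‖q‖ + 1 / ‖q‖))) : ℝ) : ℂ)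
          * α (Complex.arg q)
        * ((Complex.normSq x : ℂ) / (8 * ((A : ℝ) : ℂ)^2)
            * Complex.exp (-(Complex.normSq x : ℂ) / (4 * ((A : ℝ) : ℂ)))) := by
  have hApos : 0 < A := by
    rw [hA]; apply div_pos (norm_pos_iff.mpr hq); positivity
  have hA' : (A:ℂ) ≠ 0 := Complex.ofReal_ne_zero.mpr hApos.ne'
  have hform : ∀ p : ℂ, ‖q‖ * Complex.normSq p / (2 * σ ^ 2)
      = A * Complex.normSq p := by intro p; rw [hA]; ring
  clear hA
  rw [hatvarpi]
  simp only [varpi, hform]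
  have hre : ∀ p : ℂ,
      Complex.exp (-Complex.I * (((starRingEnd ℂ p) * x).re : ℂ))
        * (((Real.exp (2 * ν) / ‖q‖
            * Real.exp (-(ν * (‖q‖ + 1 / ‖q‖))) : ℝ) : ℂ)
          * α (Complex.arg q)
          * (((1 - A * Complex.normSq p) * rexp (-(A * Complex.normSq p)) : ℝ) : ℂ))
      = (((Real.exp (2 * ν) / ‖q‖
            * Real.exp (-(ν * (‖q‖ + 1 / ‖q‖))) : ℝ) : ℂ)
          * α (Complex.arg q))
        * (Complex.exp (-Complex.I * (((starRingEnd ℂ p) * x).re : ℂ))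
          * (((1 - A * Complex.normSq p) * rexp (-(A * Complex.normSq p)) : ℝ) : ℂ)) := by
    intro p; ring
  simp only [hre]
  rw [integral_const_mul, key2D hApos x]
  have hπ : (π:ℂ) ≠ 0 := Complex.ofReal_ne_zero.mpr Real.pi_ne_zero
  have hscal : ∀ E : ℂ, ((1/(2*π):ℝ):ℂ)
      * ((↑π/(A:ℂ)) * ((Complex.normSq x : ℂ)/(4*(A:ℂ))) * E)
      = (Complex.normSq x : ℂ)/(8*(A:ℂ)^2) * E := by
    intro E
    push_cast
    field_simp
    ring
  rw [mul_left_comm, hscal]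

lemma OmegaAff_eq (ν σ : ℝ) (hσ : 0 < σ) (α : ℝ → ℂ) (q : ℂ) (hq : q ≠ 0) :
    OmegaAff ν σ α q
      = ((Real.exp (2 * ν) / ‖q‖
            * Real.exp (-(ν * (‖q‖ + 1 / ‖q‖))) : ℝ) : ℂ)
          * α (Complex.arg q)
        * ((π * σ^2 / ‖q‖ : ℝ) : ℂ) := by
  obtain ⟨A, hA⟩ : ∃ A : ℝ, A = ‖q‖ / (2 * σ^2) := ⟨_, rfl⟩
  have hApos : 0 < A := by
    rw [hA]; apply div_pos (norm_pos_iff.mpr hq); positivity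
  have hA' : (A:ℂ) ≠ 0 := Complex.ofReal_ne_zero.mpr hApos.ne'
  set C : ℂ := ((Real.exp (2 * ν) / ‖q‖
      * Real.exp (-(ν * (‖q‖ + 1 / ‖q‖))) : ℝ) : ℂ)
      * α (Complex.arg q) with hC
  have hae : (fun x : ℂ => hatvarpi ν σ α q x / (Complex.normSq x : ℂ))
      =ᵐ[volume] fun x : ℂ =>
        C * (1 / (8 * (A:ℂ)^2)) * Complex.exp (-(Complex.normSq x : ℂ) / (4 * (A:ℂ))) := by
    have h0 : (volume : Measure ℂ) {0} = 0 := measure_singleton _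
    filter_upwards [measure_eq_zero_iff_ae_notMem.mp h0] with x hx
    have hxne : x ≠ 0 := by simpa using hx
    have hN : (Complex.normSq x : ℂ) ≠ 0 := by
      exact Complex.ofReal_ne_zero.mpr (Complex.normSq_pos.mpr hxne).ne'
    rw [hatvarpi_eq ν σ hσ α q hq hA x, hC, div_eq_iff hN]
    ring
  rw [OmegaAff, integral_congr_ae hae, integral_const_mul]
  have hb : (0:ℝ) < 1 / (4*A) := by positivity
  have harg : ∀ x : ℂ, -(Complex.normSq x : ℂ) / (4 * (A:ℂ))
      = -((1/(4*A) : ℝ) : ℂ) * ((‖x‖ : ℝ) : ℂ)^2 := by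
    intro x
    rw [Complex.normSq_eq_norm_sq]
    push_cast
    field_simp
  simp only [harg]
  rw [GaussianFourier.integral_cexp_neg_mul_sq_norm (by simpa using hb : (0:ℝ) < (((1/(4*A):ℝ):ℂ)).re)]
  rw [Complex.finrank_real_complex]
  norm_num
  have hπ : (π:ℂ) ≠ 0 := Complex.ofReal_ne_zero.mpr Real.pi_ne_zero
  have hσ' : (σ:ℂ) ≠ 0 := Complex.ofReal_ne_zero.mpr hσ.ne'
  have habs : ((‖q‖ : ℝ) : ℂ) ≠ 0 := by
    simpa using (norm_ne_zero_iff.mpr hq)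
  have hAc : (A:ℂ) = ((‖q‖ : ℝ):ℂ)/(2*(σ:ℂ)^2) := by
    rw [hA]; push_cast; ring
  rw [mul_assoc]
  congr 1
  rw [hAc]
  field_simp
  ring

end AuxOmega2

/-- For the weight ϖ above, Ω(q) = (πσ²e^{2ν}/|q|²) e^{-ν(|q|+1/|q|)} α(arg q);
in particular Ω(1) = πσ². -/
theorem OmegaAff_closed_form (ν σ : ℝ) (hν : 0 < ν) (hσ : 0 < σ) (α : ℝ → ℂ)
    (hα : ∀ θ : ℝ, starRingEnd ℂ (α θ) = α (-θ)) (hα0 : α 0 = 1) :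
    (∀ q : ℂ, q ≠ 0 →
      OmegaAff ν σ α q
        = ((π * σ ^ 2 * Real.exp (2 * ν) / ‖q‖ ^ 2
            * Real.exp (-(ν * (‖q‖ + 1 / ‖q‖))) : ℝ) : ℂ)
          * α (Complex.arg q)) ∧
    OmegaAff ν σ α 1 = ((π * σ ^ 2 : ℝ) : ℂ) := by
  have hmain : ∀ q : ℂ, q ≠ 0 →
      OmegaAff ν σ α q
        = ((π * σ ^ 2 * Real.exp (2 * ν) / ‖q‖ ^ 2
            * Real.exp (-(ν * (‖q‖ + 1 / ‖q‖))) : ℝ) : ℂ)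
          * α (Complex.arg q) := by
    intro q hq
    rw [OmegaAff_eq ν σ hσ α q hq, mul_right_comm]
    congr 1
    rw [← Complex.ofReal_mul]
    congr 1
    have habs : ‖q‖ ≠ 0 := norm_ne_zero_iff.mpr hq
    field_simp
  refine ⟨hmain, ?_⟩
  rw [hmain 1 one_ne_zero, Complex.arg_one, hα0, mul_one]
  have hr : π * σ ^ 2 * Real.exp (2 * ν) / ‖(1:ℂ)‖ ^ 2
      * Real.exp (-(ν * (‖(1:ℂ)‖ + 1 / ‖(1:ℂ)‖))) = π * σ ^ 2 := by
    rw [norm_one, one_pow, div_one, show (1 + 1/1 : ℝ) = 2 by norm_num, mul_assoc,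
      ← Real.exp_add, show 2*ν + -(ν*2) = 0 by ring, Real.exp_zero, mul_one]
  rw [hr]
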